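/- Let ε ∈ (0,1/2), let f : {-1,1}^n → {-1,1} be a Boolean function, and let p : {-1,1}^n → ℝ be a flat multilinear polynomial with exactly T ≥ 1 nonzero Fourier coefficients, all of the same absolute value, such that |p(x) − f(x)| ≤ ε for every x ∈ {-1,1}^n. Then the Fourier entropy of f satisfies H(f̂²) ≥ (1 − 4ε²)·log₂( T / (4(1+ε)²) ). -/

import Mathlib

open Finset

/-- The real value (`1` or `-1`) encoded by a Boolean. -/
noncomputable def bsgn (b : Bool) : ℝ := if b then 1 else -1

/-- The character `χ_S(x) = ∏_{i ∈ S} x_i` on the hypercube `{-1,1}^n`. -/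
noncomputable def chi {n : ℕ} (S : Finset (Fin n)) (x : Fin n → Bool) : ℝ :=
  ∏ i ∈ S, bsgn (x i)

/-- The Fourier coefficient `f̂(S) = E_x [f(x)·χ_S(x)]`. -/
noncomputable def fCoeff {n : ℕ} (f : (Fin n → Bool) → ℝ) (S : Finset (Fin n)) : ℝ :=
  (∑ x : Fin n → Bool, f x * chi S x) / 2 ^ n

/-- The Fourier (Shannon) entropy `H(f̂²) = Σ_S f̂(S)² log₂(1/f̂(S)²)`. -/
noncomputable def fEntropy {n : ℕ} (f : (Fin n → Bool) → ℝ) : ℝ :=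
  ∑ S : Finset (Fin n), (fCoeff f S) ^ 2 * Real.logb 2 (1 / (fCoeff f S) ^ 2)

/-- The Fourier min-entropy `H_∞(f̂²) = min_{S : f̂(S) ≠ 0} log₂(1/f̂(S)²)`. -/
noncomputable def fMinEntropy {n : ℕ} (f : (Fin n → Bool) → ℝ) : ℝ :=
  sInf {y : ℝ | ∃ S : Finset (Fin n),
    fCoeff f S ≠ 0 ∧ y = Real.logb 2 (1 / (fCoeff f S) ^ 2)}

/-- The total influence `Inf(f) = Σ_S |S|·f̂(S)²`. -/
noncomputable def totalInf {n : ℕ} (f : (Fin n → Bool) → ℝ) : ℝ :=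
  ∑ S : Finset (Fin n), (S.card : ℝ) * (fCoeff f S) ^ 2

/-- `f` is a Boolean (`±1`-valued) function. -/
def IsBooleanFunc {n : ℕ} (f : (Fin n → Bool) → ℝ) : Prop := ∀ x, f x = 1 ∨ f x = -1

lemma bsgn_mul_self (b : Bool) : bsgn b * bsgn b = 1 := by cases b <;> simp [bsgn]

lemma sum_chi_mul {n : ℕ} (x y : Fin n → Bool) :
    ∑ S : Finset (Fin n), chi S x * chi S y = if x = y then (2:ℝ)^n else 0 := by
  have h2 : ∑ S : Finset (Fin n), chi S x * chi S y
      = ∏ i : Fin n, (bsgn (x i) * bsgn (y i) + 1) := by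
    rw [Finset.prod_add, ← Finset.powerset_univ]
    apply Finset.sum_congr rfl
    intro S _
    rw [chi, chi, ← Finset.prod_mul_distrib]
    simp
  rw [h2]
  by_cases hxy : x = y
  · subst hxy
    simp only [if_pos rfl]
    rw [Finset.prod_congr rfl (fun i _ => by rw [bsgn_mul_self]; norm_num :
      ∀ i ∈ (univ : Finset (Fin n)), bsgn (x i) * bsgn (x i) + 1 = 2)]
    simp
  · rw [if_neg hxy]
    obtain ⟨i, hi⟩ : ∃ i, x i ≠ y i := by
      by_contra h; push_neg at h; exact hxy (funext h)
    apply Finset.prod_eq_zero (Finset.mem_univ i)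
    revert hi
    cases hx : x i <;> cases hy : y i <;> simp [bsgn]

lemma parseval {n : ℕ} (g : (Fin n → Bool) → ℝ) :
    ∑ S : Finset (Fin n), (fCoeff g S)^2 = (∑ x : Fin n → Bool, (g x)^2) / 2^n := by
  have h2n : ((2:ℝ)^n) ≠ 0 := by positivity
  have key : ∑ S : Finset (Fin n), (∑ x : Fin n → Bool, g x * chi S x)^2
      = (∑ x : Fin n → Bool, (g x)^2) * 2^n := by
    calc ∑ S : Finset (Fin n), (∑ x : Fin n → Bool, g x * chi S x)^2
        = ∑ S : Finset (Fin n), ∑ x : Fin n → Bool, ∑ y : Fin n → Bool,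
            (g x * g y) * (chi S x * chi S y) := by
          apply Finset.sum_congr rfl
          intro S _
          rw [sq, Finset.sum_mul_sum]
          apply Finset.sum_congr rfl; intro x _
          apply Finset.sum_congr rfl; intro y _
          ring
      _ = ∑ x : Fin n → Bool, ∑ y : Fin n → Bool,
            (g x * g y) * (∑ S : Finset (Fin n), chi S x * chi S y) := by
          rw [Finset.sum_comm]
          apply Finset.sum_congr rfl; intro x _
          rw [Finset.sum_comm]
          apply Finset.sum_congr rfl; intro y _
          rw [Finset.mul_sum]
      _ = ∑ x : Fin n → Bool, ∑ y : Fin n → Bool,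
            (g x * g y) * (if x = y then (2:ℝ)^n else 0) := by
          simp_rw [sum_chi_mul]
      _ = (∑ x : Fin n → Bool, (g x)^2) * 2^n := by
          rw [Finset.sum_mul]
          apply Finset.sum_congr rfl
          intro x _
          rw [Finset.sum_eq_single x]
          · simp [sq]
          · intro y _ hy; rw [if_neg (Ne.symm hy), mul_zero]
          · intro h; exact absurd (Finset.mem_univ x) h
  simp only [fCoeff, div_pow]
  rw [← Finset.sum_div, key]
  field_simp

lemma card_cube (n : ℕ) : (Fintype.card (Fin n → Bool) : ℝ) = 2^n := by
  simp [Fintype.card_fun]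

/-- Let `ε ∈ (0,1/2)`, let `f` be Boolean and let `p` be a flat
multilinear polynomial (all nonzero Fourier coefficients of the same absolute value)
with exactly `T ≥ 1` nonzero Fourier coefficients such that `|p(x) − f(x)| ≤ ε` on the
whole hypercube.  Then `H(f̂²) ≥ (1 − 4ε²)·log₂( T / (4(1+ε)²) )`. -/
theorem stmt14 {n : ℕ} (ε : ℝ) (hε0 : 0 < ε) (hε1 : ε < 1 / 2)
    (f p : (Fin n → Bool) → ℝ) (hf : IsBooleanFunc f)
    (T : ℕ) (hT1 : 1 ≤ T)
    (hTcard : T = (Finset.univ.filter (fun S : Finset (Fin n) => fCoeff p S ≠ 0)).card)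
    (hflat : ∀ S S' : Finset (Fin n), fCoeff p S ≠ 0 → fCoeff p S' ≠ 0 →
      |fCoeff p S| = |fCoeff p S'|)
    (happrox : ∀ x, |p x - f x| ≤ ε) :
    (1 - 4 * ε ^ 2) * Real.logb 2 ((T : ℝ) / (4 * (1 + ε) ^ 2)) ≤ fEntropy f := by
  have h2n : (0:ℝ) < 2^n := by positivity
  have hTpos : (0:ℝ) < (T:ℝ) := by exact_mod_cast hT1
  have hεpos : (0:ℝ) < (1+ε)^2 := by positivity
  -- Parseval for f
  have hf2 : ∀ x, f x ^ 2 = 1 := fun x => by rcases hf x with h|h <;> rw [h] <;> norm_num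
  have hsum1 : ∑ S : Finset (Fin n), (fCoeff f S)^2 = 1 := by
    rw [parseval]
    have : ∑ x : Fin n → Bool, (f x)^2 = (2:ℝ)^n := by
      simp only [hf2]
      rw [Finset.sum_const, Finset.card_univ, nsmul_eq_mul, mul_one, card_cube]
    rw [this, div_self (ne_of_gt h2n)]
  -- Parseval for f - p
  have hsub : ∀ S, fCoeff (fun x => f x - p x) S = fCoeff f S - fCoeff p S := by
    intro S
    simp only [fCoeff, sub_mul, Finset.sum_sub_distrib, sub_div]
  have hsume : ∑ S : Finset (Fin n), (fCoeff f S - fCoeff p S)^2 ≤ ε^2 := by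
    have hpv := parseval (fun x => f x - p x)
    simp only [hsub] at hpv
    rw [hpv, div_le_iff₀ h2n]
    calc ∑ x : Fin n → Bool, (f x - p x)^2
        ≤ ∑ _x : Fin n → Bool, ε^2 := by
          apply Finset.sum_le_sum; intro x _
          have h : |f x - p x| ≤ ε := by rw [abs_sub_comm]; exact happrox x
          calc (f x - p x)^2 = |f x - p x|^2 := (sq_abs _).symm
            _ ≤ ε^2 := by apply pow_le_pow_left₀ (abs_nonneg _) h
      _ = ε^2 * 2^n := by
          rw [Finset.sum_const, Finset.card_univ, nsmul_eq_mul, ← card_cube]; ring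
  -- flatness bound: T * p̂(S)² ≤ (1+ε)²
  have hb : ∀ S : Finset (Fin n), (T:ℝ) * (fCoeff p S)^2 ≤ (1+ε)^2 := by
    intro S
    by_cases hS : fCoeff p S = 0
    · rw [hS]; nlinarith
    · set A := Finset.univ.filter (fun S : Finset (Fin n) => fCoeff p S ≠ 0) with hA
      have h1 : (T:ℝ) * (fCoeff p S)^2 = ∑ S' ∈ A, (fCoeff p S')^2 := by
        rw [Finset.sum_congr rfl (fun S' hS' => by
          have hS'ne : fCoeff p S' ≠ 0 := (Finset.mem_filter.mp hS').2
          rw [← sq_abs (fCoeff p S'), ← hflat S S' hS hS'ne, sq_abs])]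
        rw [Finset.sum_const, nsmul_eq_mul, ← hTcard]
      have h2 : ∑ S' ∈ A, (fCoeff p S')^2 = ∑ S' : Finset (Fin n), (fCoeff p S')^2 := by
        apply Finset.sum_subset (Finset.subset_univ _)
        intro S' _ hS'
        simp only [hA, Finset.mem_filter, Finset.mem_univ, true_and, not_not] at hS'
        rw [hS']; ring
      have h3 : ∑ S' : Finset (Fin n), (fCoeff p S')^2 ≤ (1+ε)^2 := by
        rw [parseval, div_le_iff₀ h2n]
        calc ∑ x : Fin n → Bool, (p x)^2
            ≤ ∑ _x : Fin n → Bool, (1+ε)^2 := by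
              apply Finset.sum_le_sum; intro x _
              have hpx : |p x| ≤ 1 + ε := by
                have h1 := happrox x
                have h2 : |f x| = 1 := by rcases hf x with h|h <;> rw [h] <;> norm_num
                calc |p x| = |(p x - f x) + f x| := by ring_nf
                  _ ≤ |p x - f x| + |f x| := abs_add_le _ _
                  _ ≤ ε + 1 := by rw [h2]; linarith
                  _ = 1 + ε := by ring
              calc (p x)^2 = |p x|^2 := (sq_abs _).symm
                _ ≤ (1+ε)^2 := by apply pow_le_pow_left₀ (abs_nonneg _) hpx
          _ = (1+ε)^2 * 2^n := by
              rw [Finset.sum_const, Finset.card_univ, nsmul_eq_mul, ← card_cube]; ring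
      rw [h1, h2]; exact h3
  -- entropy terms nonneg
  set a : Finset (Fin n) → ℝ := fun S => (fCoeff f S)^2 with haDef
  have haS1 : ∀ S, a S ≤ 1 := by
    intro S
    rw [← hsum1]
    exact Finset.single_le_sum (fun S _ => sq_nonneg _) (Finset.mem_univ S)
  have hterm : ∀ S, 0 ≤ a S * Real.logb 2 (1 / a S) := by
    intro S
    rcases eq_or_lt_of_le (sq_nonneg (fCoeff f S)) with h|h
    · simp [haDef, ← h]
    · apply mul_nonneg (le_of_lt h)
      apply Real.logb_nonneg one_lt_two
      rw [le_div_iff₀ h, one_mul]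
      exact haS1 S
  have hEnonneg : 0 ≤ fEntropy f := Finset.sum_nonneg (fun S _ => hterm S)
  set L := Real.logb 2 ((T : ℝ) / (4 * (1 + ε) ^ 2)) with hLdef
  have h4ε : 0 < 1 - 4 * ε^2 := by nlinarith
  by_cases hL : 0 ≤ L
  · -- main case
    set t : ℝ := 4 * (1+ε)^2 / (T:ℝ) with htdef
    have htpos : 0 < t := by positivity
    have htinv : 1 / t = (T : ℝ) / (4 * (1 + ε) ^ 2) := by
      rw [htdef, one_div_div]
    set B := Finset.univ.filter (fun S : Finset (Fin n) => t ≤ a S) with hB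
    -- mass of B is small
    have hBmass : ∑ S ∈ B, a S ≤ 4 * ε^2 := by
      have hpt : ∀ S ∈ B, a S ≤ 4 * (fCoeff f S - fCoeff p S)^2 := by
        intro S hS
        have h1 : t ≤ a S := (Finset.mem_filter.mp hS).2
        have h2 : 4 * (fCoeff p S)^2 ≤ a S := by
          have := hb S
          have h3 : (fCoeff p S)^2 ≤ (1+ε)^2 / (T:ℝ) := by
            rw [le_div_iff₀ hTpos]; linarith [hb S]
          calc 4 * (fCoeff p S)^2 ≤ 4 * ((1+ε)^2 / (T:ℝ)) := by linarith
            _ = t := by rw [htdef]; ring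
            _ ≤ a S := h1
        have haS : a S = (fCoeff f S)^2 := rfl
        nlinarith [sq_nonneg (fCoeff f S - 2 * fCoeff p S)]
      calc ∑ S ∈ B, a S ≤ ∑ S ∈ B, 4 * (fCoeff f S - fCoeff p S)^2 :=
            Finset.sum_le_sum hpt
        _ ≤ ∑ S : Finset (Fin n), 4 * (fCoeff f S - fCoeff p S)^2 :=
            Finset.sum_le_sum_of_subset_of_nonneg (Finset.subset_univ _)
              (fun S _ _ => by positivity)
        _ = 4 * ∑ S : Finset (Fin n), (fCoeff f S - fCoeff p S)^2 := by
            rw [Finset.mul_sum]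
        _ ≤ 4 * ε^2 := by linarith
    have hsplit : ∑ S ∈ B, a S + ∑ S ∈ Finset.univ.filter
        (fun S : Finset (Fin n) => ¬ t ≤ a S), a S = 1 := by
      rw [Finset.sum_filter_add_sum_filter_not]
      exact hsum1
    have hBc : 1 - 4 * ε^2 ≤ ∑ S ∈ Finset.univ.filter
        (fun S : Finset (Fin n) => ¬ t ≤ a S), a S := by linarith
    calc (1 - 4 * ε ^ 2) * L
        ≤ (∑ S ∈ Finset.univ.filter (fun S : Finset (Fin n) => ¬ t ≤ a S), a S) * L :=
          mul_le_mul_of_nonneg_right hBc hL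
      _ = ∑ S ∈ Finset.univ.filter (fun S : Finset (Fin n) => ¬ t ≤ a S), a S * L := by
          rw [Finset.sum_mul]
      _ ≤ ∑ S ∈ Finset.univ.filter (fun S : Finset (Fin n) => ¬ t ≤ a S),
            a S * Real.logb 2 (1 / a S) := by
          apply Finset.sum_le_sum
          intro S hS
          have hlt : a S < t := lt_of_not_ge (Finset.mem_filter.mp hS).2
          rcases eq_or_lt_of_le (sq_nonneg (fCoeff f S)) with h|h
          · simp [haDef, ← h]
          · apply mul_le_mul_of_nonneg_left _ (le_of_lt h)
            rw [hLdef, ← htinv]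
            exact Real.logb_le_logb_of_le one_lt_two (by positivity)
              (one_div_le_one_div_of_le h (le_of_lt hlt))
      _ ≤ fEntropy f := by
          rw [fEntropy]
          apply Finset.sum_le_sum_of_subset_of_nonneg (Finset.subset_univ _)
          intro S _ _
          exact hterm S
  · push_neg at hL
    have : (1 - 4 * ε ^ 2) * L ≤ 0 :=
      mul_nonpos_of_nonneg_of_nonpos (le_of_lt h4ε) (le_of_lt hL)
    linarith
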